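/- Switch structure of the optimal policy for Markov-modulated arrivals in the uniform case (Theorem 5, part 1, of the paper): let 𝒜 be a finite set of arrival vectors with Markov kernel κ (κ(A,A') ≥ 0, Σ_{A'} κ(A,A') = 1), and let V : 𝒬 × 𝒜 → ℝ be such that V(·,A') is monotone on 𝒬 for every A' ∈ 𝒜. Define the state-action cost J̃_V(Q,A,u) = g(Q,u) + Σ_{A' ∈ 𝒜} κ(A,A') · V(Q'(Q,u,A), A'). Then for all (Q,A) and u ∈ Fin M with Q u < N u: if J̃_V(Q,A,u) ≤ J̃_V(Q,A,v) for all v ∈ Fin M, then J̃_V(Q + e_u, A, u) ≤ J̃_V(Q + e_u, A, v) for all v ∈ Fin M; i.e., the optimal action at (Q,A) remains optimal at (Q + e_u, A). -/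

import Mathlib

open Finset

/-- State space of the uniform-channel multicast MDP: request queue vectors capped by `N`. -/
def QSpace (M : ℕ) (N : Fin M → ℕ) : Type :=
  {Q : Fin M → ℕ // ∀ m, Q m ≤ N m}

/-- Next queue state when content `u` is multicast in state `Q` with current arrival `A`. -/
def nextQ {M : ℕ} {N : Fin M → ℕ} (Q : QSpace M N) (u : Fin M) (A : Fin M → ℕ) :
    QSpace M N :=
  ⟨fun m => min ((if m = u then 0 else Q.1 m) + A m) (N m), fun _ => min_le_right _ _⟩

/-- Per-stage cost in the uniform case. -/
noncomputable def gCost {M : ℕ} {N : Fin M → ℕ} (wp wf : ℝ) (p f : Fin M → ℝ)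
    (Q : QSpace M N) (u : Fin M) : ℝ :=
  (∑ m, (Q.1 m : ℝ)) + wp * p u + wf * f u

/-- State-action cost function with Markov-modulated arrivals:
`J̃_V(Q,A,u) = g(Q,u) + Σ_{A' ∈ 𝒜} κ(A,A') · V(Q'(Q,u,A), A')`. -/
noncomputable def JTilde {M : ℕ} {N : Fin M → ℕ} (𝒜 : Finset (Fin M → ℕ))
    (κ : (Fin M → ℕ) → (Fin M → ℕ) → ℝ) (wp wf : ℝ) (p f : Fin M → ℝ)
    (V : QSpace M N → (Fin M → ℕ) → ℝ) (Q : QSpace M N) (A : Fin M → ℕ)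
    (u : Fin M) : ℝ :=
  gCost wp wf p f Q u + ∑ A' ∈ 𝒜, κ A A' * V (nextQ Q u A) A'

/-- The state `Q + e_u`: component `u` is increased by 1 (requires `Q u < N u`). -/
def addE {M : ℕ} {N : Fin M → ℕ} (Q : QSpace M N) (u : Fin M) (h : Q.1 u < N u) :
    QSpace M N :=
  ⟨Function.update Q.1 u (Q.1 u + 1), by
    intro m
    rcases eq_or_ne m u with rfl | hm
    · simp only [Function.update_self]; exact h
    · simp only [Function.update_of_ne hm]; exact Q.2 m⟩

/-- Switch structure of the optimal policy for Markov-modulated arrivals in the uniform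
case (Theorem 5, part 1): if `V(·,A')` is monotone on the queue state space for every
arrival state `A'`, and content `u` minimizes `J̃_V(Q,A,·)`, then `u` also minimizes
`J̃_V(Q+e_u,A,·)`. -/
theorem markov_optimal_policy_switch_structure
    {M : ℕ} (hM : 1 ≤ M) (N : Fin M → ℕ)
    (𝒜 : Finset (Fin M → ℕ)) (κ : (Fin M → ℕ) → (Fin M → ℕ) → ℝ)
    (hκ0 : ∀ A ∈ 𝒜, ∀ A' ∈ 𝒜, 0 ≤ κ A A') (hκ1 : ∀ A ∈ 𝒜, ∑ A' ∈ 𝒜, κ A A' = 1)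
    (wp wf : ℝ) (p f : Fin M → ℝ)
    (V : QSpace M N → (Fin M → ℕ) → ℝ)
    (hV : ∀ A' ∈ 𝒜, ∀ Q₁ Q₂ : QSpace M N, Q₁.1 ≤ Q₂.1 → V Q₁ A' ≤ V Q₂ A') :
    ∀ A ∈ 𝒜, ∀ (Q : QSpace M N) (u : Fin M) (h : Q.1 u < N u),
      (∀ v : Fin M, JTilde 𝒜 κ wp wf p f V Q A u ≤ JTilde 𝒜 κ wp wf p f V Q A v) →
      ∀ v : Fin M, JTilde 𝒜 κ wp wf p f V (addE Q u h) A u ≤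
        JTilde 𝒜 κ wp wf p f V (addE Q u h) A v := by
  intro A hA Q u h hopt v
  -- sum over addE = sum over Q + 1
  have hsum : (∑ m, ((addE Q u h).1 m : ℝ)) = (∑ m, (Q.1 m : ℝ)) + 1 := by
    have : ∀ m, ((addE Q u h).1 m : ℝ) =
        (Q.1 m : ℝ) + (if m = u then 1 else 0) := by
      intro m
      rcases eq_or_ne m u with rfl | hm
      · simp [addE]
      · simp [addE, Function.update_of_ne hm, hm]
    simp only [this, Finset.sum_add_distrib]
    simp
  -- nextQ (addE Q u h) u A = nextQ Q u A
  have hnu : nextQ (addE Q u h) u A = nextQ Q u A := by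
    apply Subtype.ext
    funext m
    rcases eq_or_ne m u with rfl | hm
    · simp [nextQ]
    · simp [nextQ, hm, addE, Function.update_of_ne hm]
  -- J(addE, u) = J(Q, u) + 1
  have hJu : JTilde 𝒜 κ wp wf p f V (addE Q u h) A u =
      JTilde 𝒜 κ wp wf p f V Q A u + 1 := by
    simp only [JTilde, gCost, hsum, hnu]; ring
  -- J(addE, v) ≥ J(Q, v) + 1
  have hJv : JTilde 𝒜 κ wp wf p f V Q A v + 1 ≤
      JTilde 𝒜 κ wp wf p f V (addE Q u h) A v := by
    have hmono : (nextQ Q v A).1 ≤ (nextQ (addE Q u h) v A).1 := by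
      intro m
      simp only [nextQ]
      apply min_le_min _ le_rfl
      apply add_le_add _ le_rfl
      rcases eq_or_ne m v with rfl | hm
      · simp
      · simp only [if_neg hm]
        rcases eq_or_ne m u with rfl | hmu
        · simp [addE]
        · simp [addE, Function.update_of_ne hmu]
    have hsumV : ∑ A' ∈ 𝒜, κ A A' * V (nextQ Q v A) A' ≤
        ∑ A' ∈ 𝒜, κ A A' * V (nextQ (addE Q u h) v A) A' := by
      apply Finset.sum_le_sum
      intro A' hA'
      exact mul_le_mul_of_nonneg_left (hV A' hA' _ _ hmono) (hκ0 A hA A' hA')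
    simp only [JTilde, gCost, hsum]
    linarith
  calc JTilde 𝒜 κ wp wf p f V (addE Q u h) A u
      = JTilde 𝒜 κ wp wf p f V Q A u + 1 := hJu
    _ ≤ JTilde 𝒜 κ wp wf p f V Q A v + 1 := by linarith [hopt v]
    _ ≤ _ := hJv
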